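/- If H ∈ ℂ^{n×n} is PT-symmetric, then H is pseudo-Hermitian; this holds regardless of whether H is diagonalizable or not. -/

import Mathlib

open Polynomial AdjoinRoot Matrix DirectSum Complex



noncomputable def lamF {q : ℂ[X]} (hq : q.Monic) : AdjoinRoot q →ₗ[ℂ] ℂ :=
  (lcoeff ℂ (q.natDegree - 1)).comp (AdjoinRoot.modByMonicHom hq)

lemma lamF_mk {q : ℂ[X]} (hq : q.Monic) (g : ℂ[X]) :
    lamF hq (mk q g) = (g %ₘ q).coeff (q.natDegree - 1) := by
  simp [lamF, AdjoinRoot.modByMonicHom_mk]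

lemma lamF_root_pow {q : ℂ[X]} (hq : q.Monic) {m : ℕ} (hm : m < q.natDegree) :
    lamF hq (root q ^ m) = if m = q.natDegree - 1 then 1 else 0 := by
  have h1 : (root q : AdjoinRoot q) ^ m = mk q (X ^ m) := by
    rw [← AdjoinRoot.mk_X, ← map_pow]
  rw [h1, lamF_mk]
  have hqd : q.degree = (q.natDegree : ℕ∞) := (degree_eq_natDegree hq.ne_zero)
  have hXm : (X ^ m : ℂ[X]) %ₘ q = X ^ m := by
    rw [Polynomial.modByMonic_eq_self_iff hq, degree_X_pow, hqd]
    exact WithBot.coe_lt_coe.mpr hm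
  rw [hXm, coeff_X_pow]
  simp [eq_comm]

lemma block_nondeg {q : ℂ[X]} (hq : q.Monic) (u : AdjoinRoot q) (hu : u ≠ 0) :
    ∃ v : AdjoinRoot q, lamF hq (u * v) ≠ 0 := by
  rcases Nat.eq_zero_or_pos q.natDegree with hD | hD
  · exfalso
    apply hu
    have hq1 : q = 1 := hq.natDegree_eq_zero.mp hD
    have h10 : (1 : AdjoinRoot q) = 0 := by
      rw [← AdjoinRoot.mk_self (f := q), hq1, _root_.map_one]
    calc u = u * 1 := (mul_one u).symm
    _ = 0 := by rw [h10, mul_zero]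
  · set D := q.natDegree with hDdef
    set pb : Module.Basis (Fin D) ℂ (AdjoinRoot q) := AdjoinRoot.powerBasisAux' hq with hpb
    have hpbpow : ∀ k : Fin D, pb k = root q ^ (k : ℕ) := fun k =>
      (AdjoinRoot.powerBasis' hq).basis_eq_pow k
    set Gm : Matrix (Fin D) (Fin D) ℂ :=
      Matrix.of (fun k l : Fin D => lamF hq (root q ^ ((k : ℕ) + (l : ℕ)))) with hGm
    have hGmlow : ∀ k l : Fin D, (k : ℕ) + (l : ℕ) < D - 1 → Gm k l = 0 := by
      intro k l h
      have : (k : ℕ) + l < D := lt_of_lt_of_le h (Nat.sub_le _ _)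
      simp only [hGm, Matrix.of_apply]
      rw [lamF_root_pow hq this]
      rw [if_neg (by omega)]
    have hGmdiag : ∀ k l : Fin D, (k : ℕ) + (l : ℕ) = D - 1 → Gm k l = 1 := by
      intro k l h
      have : (k : ℕ) + l < D := by omega
      simp only [hGm, Matrix.of_apply]
      rw [lamF_root_pow hq this]
      rw [if_pos (by omega)]
    -- det Gm ≠ 0
    have hGmdet : Gm.det ≠ 0 := by
      set C : Matrix (Fin D) (Fin D) ℂ := Gm.submatrix id Fin.rev with hC
      have hCtri : ∀ i j : Fin D, i < j → C i j = 0 := by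
        intro i j hij
        apply hGmlow
        have h1 : ((Fin.rev j : Fin D) : ℕ) = D - ((j : ℕ) + 1) := Fin.val_rev j
        have h2 : (j : ℕ) < D := j.isLt
        have h3 : (i : ℕ) < (j : ℕ) := hij
        simp only [id_eq]
        omega
      have hCdiag : ∀ i : Fin D, C i i = 1 := by
        intro i
        apply hGmdiag
        have h1 : ((Fin.rev i : Fin D) : ℕ) = D - ((i : ℕ) + 1) := Fin.val_rev i
        have h2 : (i : ℕ) < D := i.isLt
        simp only [id_eq]
        omega
      have hCdet : C.det = 1 := by
        have := Matrix.det_of_lowerTriangular C (by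
          intro i j hij
          exact hCtri i j hij)
        rw [this]
        simp [hCdiag]
      have hsub : C.det = (Equiv.Perm.sign (Fin.revPerm : Equiv.Perm (Fin D)) : ℂ) * Gm.det := by
        rw [hC]
        exact Matrix.det_permute' (Fin.revPerm) Gm
      intro h0
      rw [hsub, h0, mul_zero] at hCdet
      exact one_ne_zero hCdet.symm
    have key : ∀ l : Fin D, lamF hq (u * root q ^ (l : ℕ)) =
        Matrix.vecMul (fun k => pb.repr u k) Gm l := by
      intro l
      conv_lhs => rw [← pb.sum_repr u]
      rw [Finset.sum_mul, map_sum, Matrix.vecMul, dotProduct]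
      refine Finset.sum_congr rfl fun k _ => ?_
      rw [hpbpow k, smul_mul_assoc, LinearMap.map_smul, ← pow_add]
      simp [hGm, smul_eq_mul]
    by_contra hcon
    push_neg at hcon
    have hv : Matrix.vecMul (fun k => pb.repr u k) Gm = 0 := by
      funext l
      rw [← key l]
      exact hcon _
    have hc0 : (fun k => pb.repr u k) = 0 := by
      have h2 := congrArg (fun w => Matrix.vecMul w Gm⁻¹) hv
      simp only [Matrix.vecMul_vecMul] at h2
      rw [Matrix.mul_nonsing_inv Gm (isUnit_iff_ne_zero.mpr hGmdet)] at h2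
      simpa using h2
    apply hu
    have hrepr : pb.repr u = 0 := by
      ext k; exact congrFun hc0 k
    have := congrArg pb.repr.symm hrepr
    simpa using this


lemma poly_smul_eq {q : ℂ[X]} (r : ℂ[X]) (u : ℂ[X] ⧸ (ℂ[X] ∙ q)) :
    r • u = Ideal.Quotient.mk _ r * u := by
  obtain ⟨g, rfl⟩ := Submodule.Quotient.mk_surjective _ u
  rw [← Submodule.Quotient.mk_smul]
  rw [show (Ideal.Quotient.mk (ℂ[X] ∙ q) r * Submodule.Quotient.mk g : ℂ[X] ⧸ (ℂ[X] ∙ q))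
      = Ideal.Quotient.mk _ (r * g) from rfl]
  rfl

set_option maxHeartbeats 2000000 in
set_option synthInstance.maxHeartbeats 200000 in
lemma exists_symm_intertwiner (n : ℕ) (H : Matrix (Fin n) (Fin n) ℂ) :
    ∃ B : Matrix (Fin n) (Fin n) ℂ, Bᵀ = B ∧ IsUnit B ∧ Hᵀ * B = B * H := by
  classical
  set f : (Fin n → ℂ) →ₗ[ℂ] (Fin n → ℂ) := H.mulVecLin with hf
  have tors : Module.IsTorsion ℂ[X] (Module.AEval' f) := by
    intro x
    refine ⟨⟨f.charpoly, mem_nonZeroDivisors_of_ne_zero f.charpoly_monic.ne_zero⟩, ?_⟩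
    have hx : x = Module.AEval'.of f ((Module.AEval'.of f).symm x) := by simp
    rw [Submonoid.smul_def, hx, ← Module.AEval.of_aeval_smul]
    rw [LinearMap.aeval_self_charpoly]
    simp
  obtain ⟨ι, hι, p, hp, e, ⟨iso0⟩⟩ :=
    Module.equiv_directSum_of_isTorsion (R := ℂ[X]) (M := Module.AEval' f) tors
  haveI := hι
  set q : ι → ℂ[X] := fun i => (p i ^ e i) * Polynomial.C ((p i ^ e i).leadingCoeff)⁻¹ with hqdef
  have hpe0 : ∀ i, (p i ^ e i) ≠ 0 := fun i => pow_ne_zero _ (hp i).ne_zero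
  have hq : ∀ i, (q i).Monic := fun i => monic_mul_leadingCoeff_inv (hpe0 i)
  have hspan : ∀ i, (ℂ[X] ∙ (p i ^ e i)) = (ℂ[X] ∙ q i) := by
    intro i
    apply Ideal.span_singleton_eq_span_singleton.mpr
    have hu : IsUnit (Polynomial.C ((p i ^ e i).leadingCoeff)⁻¹) :=
      Polynomial.isUnit_C.mpr (isUnit_iff_ne_zero.mpr (inv_ne_zero (leadingCoeff_ne_zero.mpr (hpe0 i))))
    exact ⟨hu.unit, by rw [IsUnit.unit_spec]⟩
  set iso1 : Module.AEval' f ≃ₗ[ℂ[X]] ⨁ i : ι, ℂ[X] ⧸ (ℂ[X] ∙ q i) :=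
    iso0.trans (DFinsupp.mapRange.linearEquiv fun i => Submodule.quotEquivOfEq _ _ (hspan i)) with hiso1
  set g : (Fin n → ℂ) ≃ₗ[ℂ] (⨁ i : ι, ℂ[X] ⧸ (ℂ[X] ∙ q i)) :=
    (Module.AEval'.of f).trans (iso1.restrictScalars ℂ) with hg
  have hgX : ∀ (x : Fin n → ℂ) (i : ι),
      g (H.mulVec x) i = Ideal.Quotient.mk (ℂ[X] ∙ q i) X * (g x i) := by
    intro x i
    have h1 : g (H.mulVec x) = (X : ℂ[X]) • g x := by
      rw [hg]
      simp only [LinearEquiv.trans_apply, LinearEquiv.restrictScalars_apply]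
      rw [show H.mulVec x = f x from rfl, ← Module.AEval'.X_smul_of]
      exact _root_.map_smul iso1 X _
    rw [h1, DFinsupp.smul_apply, poly_smul_eq]
  -- the bilinear form
  set bl : (Fin n → ℂ) →ₗ[ℂ] (Fin n → ℂ) →ₗ[ℂ] ℂ :=
    LinearMap.mk₂ ℂ (fun x y => ∑ i : ι, lamF (hq i) ((g x i) * (g y i)))
      (fun x x' y => by
        simp only [_root_.map_add, DirectSum.add_apply, add_mul, LinearMap.map_add,
          Finset.sum_add_distrib]
        rw [← Finset.sum_add_distrib]; exact Finset.sum_congr rfl fun i _ => (lamF (hq i)).map_add _ _)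
      (fun c x y => by
        have hcomp : ∀ (w : ⨁ i : ι, ℂ[X] ⧸ (ℂ[X] ∙ q i)) (i : ι), (c • w) i = c • (w i) :=
          fun w i => DFinsupp.smul_apply c w i
        simp only [_root_.map_smul, hcomp, smul_mul_assoc, LinearMap.map_smul,
          smul_eq_mul, Finset.mul_sum]
        exact Finset.sum_congr rfl fun i _ => (lamF (hq i)).map_smul c _)
      (fun x y y' => by
        simp only [_root_.map_add, DirectSum.add_apply, mul_add, LinearMap.map_add,
          Finset.sum_add_distrib]
        rw [← Finset.sum_add_distrib]; exact Finset.sum_congr rfl fun i _ => (lamF (hq i)).map_add _ _)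
      (fun c x y => by
        have hcomp : ∀ (w : ⨁ i : ι, ℂ[X] ⧸ (ℂ[X] ∙ q i)) (i : ι), (c • w) i = c • (w i) :=
          fun w i => DFinsupp.smul_apply c w i
        simp only [_root_.map_smul, hcomp, mul_smul_comm, LinearMap.map_smul,
          smul_eq_mul, Finset.mul_sum]
        exact Finset.sum_congr rfl fun i _ => (lamF (hq i)).map_smul c _) with hbl
  have hsymm : ∀ x y, bl x y = bl y x := by
    intro x y
    simp only [hbl, LinearMap.mk₂_apply]
    exact Finset.sum_congr rfl fun i _ => by rw [mul_comm]
  have hbH : ∀ x y, bl (H.mulVec x) y = bl x (H.mulVec y) := by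
    intro x y
    simp only [hbl, LinearMap.mk₂_apply]
    refine Finset.sum_congr rfl fun i _ => ?_
    rw [hgX, hgX]
    congr 1
    exact ((mul_left_comm ((g x) i) _ _).trans (mul_assoc _ _ _).symm).symm
  have hnd : ∀ x, x ≠ 0 → ∃ y, bl x y ≠ 0 := by
    intro x hx
    have hgx : g x ≠ 0 := by
      intro h
      apply hx
      have := congrArg g.symm h
      simpa using this
    have hex : ∃ i, g x i ≠ 0 := by
      by_contra h
      push_neg at h
      exact hgx (DFinsupp.ext h)
    obtain ⟨i, hi⟩ := hex
    obtain ⟨v, hv⟩ := block_nondeg (hq i) (g x i) hi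
    refine ⟨g.symm (DirectSum.of _ i v), ?_⟩
    simp only [hbl, LinearMap.mk₂_apply, LinearEquiv.apply_symm_apply]
    rw [Finset.sum_eq_single i]
    · erw [DirectSum.of_eq_same]
      exact hv
    · intro j _ hj
      erw [DirectSum.of_eq_of_ne _ _ _ hj]  -- maybe arg order wrong
      simp
      exact (lamF (hq j)).map_zero
    · simp
  -- the Gram matrix of bl in the standard basis
  set B : Matrix (Fin n) (Fin n) ℂ :=
    Matrix.of (fun i j => bl (Pi.single i 1) (Pi.single j 1)) with hB
  have hsingle : ∀ x : Fin n → ℂ, x = ∑ i, x i • (Pi.single i (1:ℂ) : Fin n → ℂ) := by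
    intro x
    funext k
    rw [Finset.sum_apply]
    simp [Pi.single_apply]
  have hexp : ∀ x y, bl x y = x ⬝ᵥ B.mulVec y := by
    intro x y
    calc bl x y = ∑ i, ∑ j, x i * (y j * bl (Pi.single i 1) (Pi.single j 1)) := by
          conv_lhs => rw [hsingle x]
          rw [map_sum, LinearMap.sum_apply]
          refine Finset.sum_congr rfl fun i _ => ?_
          rw [← Finset.mul_sum, LinearMap.map_smul, LinearMap.smul_apply, smul_eq_mul]
          congr 1
          conv_lhs => rw [hsingle y]
          rw [map_sum]
          refine Finset.sum_congr rfl fun j _ => ?_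
          rw [LinearMap.map_smul, smul_eq_mul]
      _ = x ⬝ᵥ B.mulVec y := by
          rw [dotProduct]
          refine Finset.sum_congr rfl fun i _ => ?_
          rw [Matrix.mulVec, dotProduct, Finset.mul_sum]
          refine Finset.sum_congr rfl fun j _ => ?_
          simp only [hB, Matrix.of_apply]
          ring
  refine ⟨B, ?_, ?_, ?_⟩
  · ext i j
    simp only [Matrix.transpose_apply, hB, Matrix.of_apply]
    exact hsymm _ _
  · rw [Matrix.isUnit_iff_isUnit_det, isUnit_iff_ne_zero]
    intro hdet
    obtain ⟨v, hv0, hvB⟩ := Matrix.exists_mulVec_eq_zero_iff.mpr hdet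
    obtain ⟨y, hy⟩ := hnd v hv0
    apply hy
    rw [hsymm, hexp, hvB, dotProduct_zero]
  · have h2 : ∀ x y : Fin n → ℂ, x ⬝ᵥ (Hᵀ * B).mulVec y = x ⬝ᵥ (B * H).mulVec y := by
      intro x y
      rw [← Matrix.mulVec_mulVec, ← Matrix.mulVec_mulVec]
      rw [Matrix.dotProduct_mulVec x Hᵀ, Matrix.vecMul_transpose, ← hexp, hbH, hexp,
        Matrix.mulVec_mulVec]
    ext i j
    have := h2 (Pi.single i 1) (Pi.single j 1)
    simpa [single_dotProduct, Matrix.mulVec_single] using this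


-- infinitude of the unit circle
lemma circle_infinite : Set.Infinite {z : ℂ | ‖z‖ = 1} := by
  have hIoo : (Set.Ioo (0:ℝ) 1).Infinite := Set.Ioo_infinite (by norm_num)
  haveI : Infinite (Set.Ioo (0:ℝ) 1) := Set.infinite_coe_iff.mpr hIoo
  apply Set.infinite_of_injective_forall_mem
    (f := fun t : Set.Ioo (0:ℝ) 1 => Complex.exp ((t : ℝ) * Complex.I))
  case hi =>
    intro a b hab
    rw [Complex.exp_eq_exp_iff_exists_int] at hab
    obtain ⟨k, hk⟩ := hab
    have hI : ((a : ℝ) : ℂ) = ((b : ℝ) : ℂ) + k * (2 * (Real.pi : ℂ)) := by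
      have hI2 : ((a:ℝ) : ℂ) * Complex.I = (((b:ℝ) : ℂ) + k * (2 * (Real.pi : ℂ))) * Complex.I := by
        rw [hk]; ring
      exact mul_right_cancel₀ Complex.I_ne_zero hI2
    have hreal : (a : ℝ) = (b : ℝ) + k * (2 * Real.pi) := by
      exact_mod_cast hI
    have hpi : (3:ℝ) < Real.pi := Real.pi_gt_three
    have ha1 := a.2.1; have ha2 := a.2.2; have hb1 := b.2.1; have hb2 := b.2.2
    have hk0 : k = 0 := by
      rcases lt_trichotomy k 0 with h | h | h
      · exfalso
        have hk1 : k ≤ -1 := by omega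
        have : (k : ℝ) ≤ -1 := by exact_mod_cast hk1
        nlinarith
      · exact h
      · exfalso
        have : (1:ℝ) ≤ (k : ℝ) := by exact_mod_cast h
        nlinarith
    apply Subtype.ext
    rw [hreal, hk0]
    simp
  case hf =>
    intro t
    simp only [Set.mem_setOf_eq]
    exact Complex.norm_exp_ofReal_mul_I _
/-- In finite dimensions, a PT-symmetric Hamiltonian `H` (there is `P` with `P² = I` and
`P·conj(H) = H·P`) is pseudo-Hermitian: there are a non-singular Hermitian `G` and a
Hermitian `S` with `H = -G⁻¹S`.  This holds regardless of diagonalizability of `H`. -/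
theorem ptSymmetric_pseudoHermitian (n : ℕ) (H : Matrix (Fin n) (Fin n) ℂ)
    (hPT : ∃ P : Matrix (Fin n) (Fin n) ℂ, P * P = 1 ∧
      P * H.map (starRingEnd ℂ) = H * P) :
    ∃ G S : Matrix (Fin n) (Fin n) ℂ, G.IsHermitian ∧ IsUnit G ∧ S.IsHermitian ∧
      H = -(G⁻¹ * S) := by
  classical
  obtain ⟨P, hP1, hPH⟩ := hPT
  obtain ⟨B, hBsym, hBunit, hBint⟩ := exists_symm_intertwiner n H
  obtain ⟨A, hAdef⟩ : ∃ A : Matrix (Fin n) (Fin n) ℂ, A = Pᵀ * B := ⟨_, rfl⟩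
  have hPt : Hᴴ * Pᵀ = Pᵀ * Hᵀ := by
    have h := congrArg Matrix.transpose hPH
    rw [Matrix.transpose_mul, Matrix.transpose_mul] at h
    have hconj : (H.map (starRingEnd ℂ))ᵀ = Hᴴ := by
      ext i j
      simp [Matrix.conjTranspose_apply, Matrix.map_apply, Matrix.transpose_apply]
    rwa [hconj] at h
  have hA : A * H = Hᴴ * A := by
    calc A * H = Pᵀ * (B * H) := by rw [hAdef, Matrix.mul_assoc]
      _ = Pᵀ * (Hᵀ * B) := by rw [hBint]
      _ = (Pᵀ * Hᵀ) * B := by rw [Matrix.mul_assoc]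
      _ = (Hᴴ * Pᵀ) * B := by rw [hPt]
      _ = Hᴴ * A := by rw [hAdef, Matrix.mul_assoc]
  have hA' : Aᴴ * H = Hᴴ * Aᴴ := by
    have h := congrArg Matrix.conjTranspose hA
    rw [Matrix.conjTranspose_mul, Matrix.conjTranspose_mul,
      Matrix.conjTranspose_conjTranspose] at h
    exact h.symm
  have hPP : Pᵀ * Pᵀ = 1 := by rw [← Matrix.transpose_mul, hP1, Matrix.transpose_one]
  have hPunit : IsUnit Pᵀ := by
    apply (Matrix.isUnit_iff_isUnit_det _).mpr
    apply IsUnit.of_mul_eq_one (Pᵀ.det)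
    rw [← Matrix.det_mul, hPP, Matrix.det_one]
  have hAunit : IsUnit A := by rw [hAdef]; exact hPunit.mul hBunit
  have hAHunit : IsUnit (Aᴴ) := by
    rw [Matrix.isUnit_iff_isUnit_det, Matrix.det_conjTranspose, isUnit_iff_ne_zero]
    have := (Matrix.isUnit_iff_isUnit_det _).mp hAunit
    rw [isUnit_iff_ne_zero] at this
    simpa using this
  -- determinant polynomial
  obtain ⟨φ, hφdef⟩ : ∃ φ : Polynomial ℂ,
      φ = ((X : ℂ[X]) • A.map Polynomial.C + Aᴴ.map Polynomial.C).det := ⟨_, rfl⟩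
  have heval : ∀ w : ℂ, φ.eval w = (w • A + Aᴴ).det := by
    intro w
    rw [hφdef, ← Polynomial.coe_evalRingHom, RingHom.map_det, RingHom.mapMatrix_apply]
    congr 1
    ext i j
    simp only [Matrix.map_apply, Matrix.add_apply, Matrix.smul_apply, smul_eq_mul,
      Polynomial.coe_evalRingHom, Polynomial.eval_add, Polynomial.eval_mul,
      Polynomial.eval_X, Polynomial.eval_C]
  have hφ0 : φ.eval 0 ≠ 0 := by
    rw [heval, zero_smul, zero_add, ← isUnit_iff_ne_zero, ← Matrix.isUnit_iff_isUnit_det]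
    exact hAHunit
  have hφ : φ ≠ 0 := by
    intro h
    apply hφ0
    rw [h, Polynomial.eval_zero]
  -- pick a unit-circle point avoiding the roots of φ
  have hroots : {w : ℂ | φ.eval w = 0}.Finite := by
    apply Set.Finite.subset (φ.roots.toFinset : Finset ℂ).finite_toSet
    intro w hw
    exact Multiset.mem_toFinset.mpr (Polynomial.mem_roots'.mpr ⟨hφ, hw⟩)
  obtain ⟨u, hu⟩ := (circle_infinite.diff hroots).nonempty
  have hu1 : ‖u‖ = 1 := hu.1
  have hu2 : φ.eval u ≠ 0 := hu.2
  obtain ⟨z, hz⟩ := IsAlgClosed.exists_pow_nat_eq u (n := 2) (by norm_num)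
  have hzabs : ‖z‖ = 1 := by
    have h2 : ‖z‖ ^ 2 = 1 := by
      rw [← norm_pow, hz, hu1]
    nlinarith [norm_nonneg z]
  have hzconj : (starRingEnd ℂ) z * z = 1 := by
    rw [mul_comm, Complex.mul_conj]
    norm_cast
    rw [Complex.normSq_eq_norm_sq, hzabs]
    norm_num
  have hzne : (starRingEnd ℂ) z ≠ 0 := by
    intro h
    rw [h, zero_mul] at hzconj
    exact zero_ne_one hzconj
  obtain ⟨G, hGdef⟩ : ∃ G : Matrix (Fin n) (Fin n) ℂ,
      G = z • A + ((starRingEnd ℂ) z) • Aᴴ := ⟨_, rfl⟩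
  have hGherm : G.IsHermitian := by
    show Gᴴ = G
    rw [hGdef, Matrix.conjTranspose_add, Matrix.conjTranspose_smul, Matrix.conjTranspose_smul,
      Matrix.conjTranspose_conjTranspose]
    rw [show (star z : ℂ) = (starRingEnd ℂ) z from rfl]
    rw [show (star ((starRingEnd ℂ) z) : ℂ) = z from by simp]
    rw [add_comm]
  have hGH : G * H = Hᴴ * G := by
    rw [hGdef, Matrix.add_mul, Matrix.mul_add, Matrix.smul_mul, Matrix.smul_mul, hA, hA',
      Matrix.mul_smul, Matrix.mul_smul]
  have hGfact : G = (starRingEnd ℂ) z • (u • A + Aᴴ) := by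
    rw [hGdef, smul_add, smul_smul]
    congr 2
    rw [← hz]
    calc z = ((starRingEnd ℂ) z * z) * z := by rw [hzconj, one_mul]
      _ = (starRingEnd ℂ) z * z ^ 2 := by ring
  have hGdet : IsUnit G.det := by
    rw [hGfact, Matrix.det_smul, isUnit_iff_ne_zero]
    apply mul_ne_zero
    · exact pow_ne_zero _ hzne
    · rw [← heval]
      exact hu2
  have hGunit : IsUnit G := (Matrix.isUnit_iff_isUnit_det _).mpr hGdet
  refine ⟨G, -(G * H), hGherm, hGunit, ?_, ?_⟩
  · show (-(G * H))ᴴ = -(G * H)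
    rw [Matrix.conjTranspose_neg, Matrix.conjTranspose_mul, hGherm.eq, ← hGH]
  · rw [Matrix.mul_neg, neg_neg, ← Matrix.mul_assoc, Matrix.nonsing_inv_mul G hGdet,
      Matrix.one_mul]
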